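/- Let A be an associative ℂ-algebra containing elements E_0, E_1, …, E_{n-1} satisfying the type B Temperley–Lieb relations. Then for all integers i, j with i > j+1 ≥ 1 (so 2 ≤ i ≤ n-1 and 0 ≤ j ≤ i-2), one has E_{i,0}E^{1,j}E_i = E_{i-2,0}E^{1,j}E_i. -/
import Mathlib

/-- `descProd E i j = E i * E (i-1) * ⋯ * E j` (empty product `1` when `j = i + 1`). -/
def descProd {A : Type*} [Monoid A] (E : ℕ → A) (i j : ℕ) : A :=
  ((List.range (i + 1 - j)).map (fun k => E (i - k))).prod

/-- `ascProd E i j = E i * E (i+1) * ⋯ * E j` (empty product `1` when `j = i - 1`). -/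
def ascProd {A : Type*} [Monoid A] (E : ℕ → A) (i j : ℕ) : A :=
  ((List.range (j + 1 - i)).map (fun k => E (i + k))).prod

theorem typeB_lemma (n : ℕ) (hn : 2 ≤ n) (δ : ℂ) (A : Type*) [Ring A] [Algebra ℂ A]
    (E : ℕ → A)
    (hsq : ∀ i, i ≤ n - 1 → E i * E i = δ • E i)
    (hcomm : ∀ i j, j + 1 < i → i ≤ n - 1 → E i * E j = E j * E i)
    (hup : ∀ i, 1 ≤ i → i + 1 ≤ n - 1 → E i * E (i + 1) * E i = E i)
    (hdown : ∀ i, 2 ≤ i → i ≤ n - 1 → E i * E (i - 1) * E i = E i)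
    (hB0 : E 0 * E 1 * E 0 * E 1 = 2 * (E 0 * E 1))
    (hB1 : E 1 * E 0 * E 1 * E 0 = 2 * (E 1 * E 0)) :
    ∀ i j, j + 1 < i → i ≤ n - 1 →
      descProd E i 0 * ascProd E 1 j * E i = descProd E (i - 2) 0 * ascProd E 1 j * E i := by
  intro i j hij hin
  have hi2 : 2 ≤ i := by omega
  -- Split descProd E i 0 = E i * E (i-1) * descProd E (i-2) 0
  have hsplit : descProd E i 0 = E i * E (i - 1) * descProd E (i - 2) 0 := by
    unfold descProd
    have h1 : i + 1 - 0 = 2 + (i - 2 + 1 - 0) := by omega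
    rw [h1, List.range_add, List.map_append, List.prod_append]
    have : List.range 2 = [0, 1] := by decide
    rw [this]
    simp only [List.map_cons, List.map_nil, List.prod_cons, List.prod_nil, List.map_map,
      mul_one, Nat.sub_zero]
    congr 1
    congr 1
    apply List.map_congr_left
    intro a _
    simp only [Function.comp_apply]
    congr 1
    omega
  -- E i commutes with descProd E (i-2) 0 and ascProd E 1 j
  have hcD : Commute (E i) (descProd E (i - 2) 0) := by
    apply Commute.list_prod_right
    intro x hx
    simp only [List.mem_map, List.mem_range] at hx
    obtain ⟨k, hk, rfl⟩ := hx
    exact (hcomm i (i - 2 - k) (by omega) hin)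
  have hcA : Commute (E i) (ascProd E 1 j) := by
    apply Commute.list_prod_right
    intro x hx
    simp only [List.mem_map, List.mem_range] at hx
    obtain ⟨k, hk, rfl⟩ := hx
    exact (hcomm i (1 + k) (by omega) hin)
  have hX : Commute (E i) (descProd E (i - 2) 0 * ascProd E 1 j) := hcD.mul_right hcA
  calc descProd E i 0 * ascProd E 1 j * E i
      = E i * E (i - 1) * (descProd E (i - 2) 0 * ascProd E 1 j * E i) := by
        rw [hsplit]; simp only [mul_assoc]
    _ = E i * E (i - 1) * (E i * (descProd E (i - 2) 0 * ascProd E 1 j)) := by rw [hX.eq]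
    _ = (E i * E (i - 1) * E i) * (descProd E (i - 2) 0 * ascProd E 1 j) := by simp only [mul_assoc]
    _ = E i * (descProd E (i - 2) 0 * ascProd E 1 j) := by rw [hdown i hi2 hin]
    _ = descProd E (i - 2) 0 * ascProd E 1 j * E i := hX.eq
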